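/- Let φ be an automorphism of a finite nilpotent group G with gcd(|φ|, |G|) = 1. Then every element g ∈ G can be written uniquely in the form g = c·u, where c ∈ C_G(φ) and u belongs to the set {v⁻¹·φ(v) : v ∈ G}. -/

import Mathlib

open Subgroup Finset
open scoped IsMulCommutative

section Helpers

variable {G : Type*} [Group G]

private lemma pow_succ_apply (φ : G ≃* G) (n : ℕ) (g : G) :
    (φ ^ (n + 1)) g = φ ((φ ^ n) g) := by
  rw [pow_succ']; rfl

private lemma one_apply' (g : G) : ((1 : G ≃* G)) g = g := rfl

/-- Core abelian decomposition lemma. -/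
private lemma core_abelian {A : Type*} [CommGroup A] [Finite A] (ψ : A ≃* A) (k : ℕ)
    (hk : ∀ a : A, (ψ ^ k) a = a) (hcop : Nat.Coprime k (Nat.card A)) (a : A) :
    ∃ d w : A, ψ d = d ∧ a = d * (w⁻¹ * ψ w) ∧
      ((∏ i ∈ Finset.range k, (ψ ^ i) a) = 1 → d = 1) := by
  rcases subsingleton_or_nontrivial A with h | h
  · exact ⟨1, 1, by rw [map_one], by apply Subsingleton.elim, fun _ => rfl⟩
  have he : 1 < Nat.card A := Finite.one_lt_card
  obtain ⟨m, -, hm⟩ := Nat.exists_mul_mod_eq_one_of_coprime hcop he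
  -- the homomorphism x ↦ ψ x * x⁻¹
  set f : A →* A := MonoidHom.mk' (fun x => ψ x * x⁻¹) (by
    intro x y
    rw [map_mul, mul_inv, mul_mul_mul_comm]) with hf
  have hfapp : ∀ x : A, f x = ψ x * x⁻¹ := fun x => rfl
  set P : A := ∏ i ∈ Finset.range k, (ψ ^ i) a with hP
  -- ψ fixes P
  have hψP : ψ P = P := by
    have h1 : (∏ i ∈ Finset.range k, (ψ ^ (i + 1)) a) * ((ψ ^ 0) a)
        = (∏ i ∈ Finset.range k, (ψ ^ i) a) * ((ψ ^ k) a) := by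
      rw [← Finset.prod_range_succ' (fun i => (ψ ^ i) a) k,
        ← Finset.prod_range_succ (fun i => (ψ ^ i) a) k]
    rw [pow_zero, one_apply', hk] at h1
    have h2 : ∏ i ∈ Finset.range k, (ψ ^ (i + 1)) a = P := mul_right_cancel h1
    calc ψ P = ∏ i ∈ Finset.range k, ψ ((ψ ^ i) a) := map_prod ψ _ _
      _ = ∏ i ∈ Finset.range k, (ψ ^ (i + 1)) a := by
          refine Finset.prod_congr rfl fun i _ => ?_
          rw [pow_succ_apply]
      _ = P := h2
  have hclaim : ∀ i : ℕ, (ψ ^ i) a * a⁻¹ ∈ f.range := by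
    intro i
    induction i with
    | zero => rw [pow_zero, one_apply', mul_inv_cancel]; exact one_mem _
    | succ i ih =>
        have : (ψ ^ (i + 1)) a * a⁻¹ = f ((ψ ^ i) a) * ((ψ ^ i) a * a⁻¹) := by
          rw [hfapp, pow_succ_apply]; group
        rw [this]
        exact mul_mem (MonoidHom.mem_range.mpr ⟨_, rfl⟩) ih
  have hQ : P * (a ^ k)⁻¹ ∈ f.range := by
    have : P * (a ^ k)⁻¹ = ∏ i ∈ Finset.range k, ((ψ ^ i) a * a⁻¹) := by
      rw [Finset.prod_mul_distrib, Finset.prod_const, Finset.card_range, inv_pow, hP]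
    rw [this]
    exact Subgroup.prod_mem _ fun i _ => hclaim i
  have hakm : a ^ (k * m) = a := by
    have hdvd : orderOf a ∣ Nat.card A := orderOf_dvd_natCard a
    have : k * m % orderOf a = 1 % orderOf a := by
      rw [← Nat.mod_mod_of_dvd _ hdvd, hm]
    calc a ^ (k * m) = a ^ (k * m % orderOf a) := (pow_mod_orderOf a _).symm
      _ = a ^ (1 % orderOf a) := by rw [this]
      _ = a ^ 1 := pow_mod_orderOf a 1
      _ = a := pow_one a
  have hd : (P * (a ^ k)⁻¹) ^ m * a = P ^ m := by
    rw [mul_pow, inv_pow, ← pow_mul, hakm]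
    group
  obtain ⟨w, hw⟩ := inv_mem (pow_mem hQ m)
  refine ⟨P ^ m, w, by rw [map_pow, hψP], ?_, fun hP1 => by rw [hP1, one_pow]⟩
  have ha : a = P ^ m * ((P * (a ^ k)⁻¹) ^ m)⁻¹ := by
    rw [mul_comm, ← hd]; group
  calc a = P ^ m * ((P * (a ^ k)⁻¹) ^ m)⁻¹ := ha
    _ = P ^ m * f w := by rw [← hw]
    _ = P ^ m * (w⁻¹ * ψ w) := by rw [hfapp, mul_comm (ψ w) w⁻¹]

end Helpers

section Existence

private lemma exists_decomp (G : Type*) [Group G] [Group.IsNilpotent G] :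
    ∀ (_ : Finite G) (φ : G ≃* G) (k : ℕ), (∀ g : G, (φ ^ k) g = g) →
      Nat.Coprime k (Nat.card G) →
      ∀ g : G, ∃ c v : G, φ c = c ∧ g = c * (v⁻¹ * φ v) := by
  refine nilpotent_center_quotient_ind
    (P := fun G _ _ => ∀ (_ : Finite G) (φ : G ≃* G) (k : ℕ),
      (∀ g : G, (φ ^ k) g = g) → Nat.Coprime k (Nat.card G) →
      ∀ g : G, ∃ c v : G, φ c = c ∧ g = c * (v⁻¹ * φ v)) G ?_ ?_
  · intro G _ _ _ φ k hk hcop g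
    exact ⟨1, 1, map_one φ, Subsingleton.elim _ _⟩
  · intro G _ _ ih _ φ k hk hcop g
    set Z := center G with hZ
    have hmap : Z.map (φ : G →* G) = Z := characteristic_iff_map_eq.mp inferInstance φ
    -- induced automorphism on the quotient
    set φq : G ⧸ Z ≃* G ⧸ Z := QuotientGroup.congr Z Z φ hmap with hφq
    have hqmk : ∀ x : G, φq (x : G ⧸ Z) = ((φ x : G) : G ⧸ Z) := fun x => rfl
    have hqpow : ∀ (i : ℕ) (x : G), (φq ^ i) (x : G ⧸ Z) = (((φ ^ i) x : G) : G ⧸ Z) := by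
      intro i
      induction i with
      | zero => intro x; rw [pow_zero, pow_zero]; rfl
      | succ i ihp => intro x; rw [pow_succ_apply, pow_succ_apply, ihp, hqmk]
    have hqk : ∀ x : G ⧸ Z, (φq ^ k) x = x := by
      intro x
      induction x using QuotientGroup.induction_on with
      | H x => rw [hqpow, hk]
    have hqcop : Nat.Coprime k (Nat.card (G ⧸ Z)) :=
      hcop.coprime_dvd_right (Subgroup.card_quotient_dvd_card Z)
    obtain ⟨cq, vq, hcq, hgq⟩ := ih inferInstance φq k hqk hqcop (g : G ⧸ Z)
    obtain ⟨c, rfl⟩ := QuotientGroup.mk_surjective cq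
    obtain ⟨v, rfl⟩ := QuotientGroup.mk_surjective vq
    -- the error terms in the center
    have hzmem : c⁻¹ * φ c ∈ Z := by
      rw [hqmk] at hcq
      have := (QuotientGroup.eq).mp hcq
      simpa using inv_mem this
    set z : G := c⁻¹ * φ c with hzdef
    have hφc : φ c = c * z := by rw [hzdef]; group
    have hz1mem : (c * (v⁻¹ * φ v))⁻¹ * g ∈ Z := by
      have h1 : ((c * (v⁻¹ * φ v) : G) : G ⧸ Z) = (g : G ⧸ Z) := by
        rw [hgq]
        rfl
      exact (QuotientGroup.eq).mp h1
    set z₁ : G := (c * (v⁻¹ * φ v))⁻¹ * g with hz₁def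
    have hgz₁ : g = c * (v⁻¹ * φ v) * z₁ := by rw [hz₁def]; group
    -- restriction of φ to the center
    have hmemZ : ∀ x : G, x ∈ Z → φ x ∈ Z := by
      intro x hx
      have hcm : Z.comap (φ : G →* G) = Z :=
        characteristic_iff_comap_eq.mp inferInstance φ
      rw [← hcm] at hx
      exact Subgroup.mem_comap.mp hx
    have hmemZ' : ∀ x : G, x ∈ Z → φ.symm x ∈ Z := by
      intro x hx
      have hcm : Z.comap (φ.symm : G →* G) = Z :=
        characteristic_iff_comap_eq.mp inferInstance φ.symm
      rw [← hcm] at hx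
      exact Subgroup.mem_comap.mp hx
    set ψ : Z ≃* Z :=
      { toFun := fun x => ⟨φ x, hmemZ x x.2⟩
        invFun := fun x => ⟨φ.symm x, hmemZ' x x.2⟩
        left_inv := fun x => by ext; simp
        right_inv := fun x => by ext; simp
        map_mul' := fun x y => by ext; simp } with hψdef
    have hψ1coe : ∀ x : Z, ((ψ x : Z) : G) = φ (x : G) := fun x => rfl
    have hψcoe : ∀ (i : ℕ) (x : Z), ((((ψ ^ i) x) : Z) : G) = (φ ^ i) (x : G) := by
      intro i
      induction i with
      | zero => intro x; rw [pow_zero, pow_zero]; rfl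
      | succ i ihp => intro x; rw [pow_succ_apply, pow_succ_apply, ← ihp]; rfl
    have hψk : ∀ x : Z, (ψ ^ k) x = x := by
      intro x; ext; rw [hψcoe, hk]
    have hcopZ : Nat.Coprime k (Nat.card Z) :=
      hcop.coprime_dvd_right (Subgroup.card_subgroup_dvd_card Z)
    set zt : Z := ⟨z, hzmem⟩ with hzt
    -- the norm of z is 1
    have hnorm : ∀ i : ℕ, (φ ^ i) c = c * ((∏ j ∈ Finset.range i, (ψ ^ j) zt : Z) : G) := by
      intro i
      induction i with
      | zero =>
          rw [pow_zero, Finset.prod_range_zero, one_apply']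
          simp
      | succ i ihp =>
          have hzc : ((∏ j ∈ Finset.range i, (ψ ^ (j + 1)) zt : Z) : G) * z
              = z * ((∏ j ∈ Finset.range i, (ψ ^ (j + 1)) zt : Z) : G) :=
            Subgroup.mem_center_iff.mp hzmem _
          rw [pow_succ_apply, ihp, map_mul, hφc]
          have h1 : φ ((∏ j ∈ Finset.range i, (ψ ^ j) zt : Z) : G)
              = ((∏ j ∈ Finset.range i, (ψ ^ (j + 1)) zt : Z) : G) := by
            rw [← hψ1coe, map_prod]
            congr 1
            refine Finset.prod_congr rfl fun j _ => ?_
            rw [pow_succ_apply]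
          rw [h1]
          have h2 : (∏ j ∈ Finset.range (i + 1), (ψ ^ j) zt : Z)
              = (∏ j ∈ Finset.range i, (ψ ^ (j + 1)) zt) * ((ψ ^ 0) zt) :=
            Finset.prod_range_succ' (fun j => (ψ ^ j) zt) i
          rw [h2, pow_zero]
          have h3 : ((((∏ j ∈ Finset.range i, (ψ ^ (j + 1)) zt) * ((1 : ↥Z ≃* ↥Z) zt) : Z)) : G)
              = ((∏ j ∈ Finset.range i, (ψ ^ (j + 1)) zt : Z) : G) * z := rfl
          rw [h3, mul_assoc, ← hzc]
    have hprodZ : ∏ j ∈ Finset.range k, (ψ ^ j) zt = 1 := by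
      have h4 := hnorm k
      rw [hk] at h4
      have h5 : ((∏ j ∈ Finset.range k, (ψ ^ j) zt : Z) : G) = 1 :=
        (left_eq_mul.mp h4)
      ext
      rw [h5]
      rfl
    obtain ⟨d, w, hdfix, hdecomp, himp⟩ := core_abelian ψ k hψk hcopZ zt
    have hd1 : d = 1 := himp hprodZ
    rw [hd1, one_mul] at hdecomp
    have hzw : z = (w : G)⁻¹ * φ (w : G) := by
      have := congrArg (fun x : Z => (x : G)) hdecomp
      simpa [hψ1coe] using this
    -- fix up the constant part
    set zt₁ : Z := ⟨z₁, hz1mem⟩ with hzt₁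
    obtain ⟨d₂, w₂, hd₂fix, hdecomp₂, -⟩ := core_abelian ψ k hψk hcopZ (w * zt₁)
    have hd₂coe : φ (d₂ : G) = (d₂ : G) := by
      have := congrArg (fun x : Z => (x : G)) hd₂fix
      simpa [hψ1coe] using this
    have hww : (w : G) * z₁ = (d₂ : G) * ((w₂ : G)⁻¹ * φ (w₂ : G)) := by
      have := congrArg (fun x : Z => (x : G)) hdecomp₂
      simpa [hψ1coe] using this
    refine ⟨c * (w : G)⁻¹ * (d₂ : G), v * (w₂ : G), ?_, ?_⟩
    · rw [map_mul, map_mul, map_inv, hφc, hzw, hd₂coe]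
      group
    · have hζ : (w : G)⁻¹ * (d₂ : G) * (w₂ : G)⁻¹ ∈ Z :=
        mul_mem (mul_mem (inv_mem w.2) d₂.2) (inv_mem w₂.2)
      have key : (w : G)⁻¹ * (d₂ : G) * (w₂ : G)⁻¹ * (v⁻¹ * φ v)
          = (v⁻¹ * φ v) * ((w : G)⁻¹ * (d₂ : G) * (w₂ : G)⁻¹) :=
        (Subgroup.mem_center_iff.mp hζ (v⁻¹ * φ v)).symm
      calc g = c * (v⁻¹ * φ v) * z₁ := hgz₁
        _ = c * (v⁻¹ * φ v) * ((w : G)⁻¹ * ((w : G) * z₁)) := by group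
        _ = c * (v⁻¹ * φ v) * ((w : G)⁻¹ * ((d₂ : G) * ((w₂ : G)⁻¹ * φ (w₂ : G)))) := by
            rw [hww]
        _ = c * ((v⁻¹ * φ v) * ((w : G)⁻¹ * (d₂ : G) * (w₂ : G)⁻¹)) * φ (w₂ : G) := by
            group
        _ = c * ((w : G)⁻¹ * (d₂ : G) * (w₂ : G)⁻¹ * (v⁻¹ * φ v)) * φ (w₂ : G) := by
            rw [key]
        _ = c * (w : G)⁻¹ * (d₂ : G) * ((v * (w₂ : G))⁻¹ * (φ v * φ (w₂ : G))) := by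
            group
        _ = c * (w : G)⁻¹ * (d₂ : G) * ((v * (w₂ : G))⁻¹ * φ (v * (w₂ : G))) := by
            rw [map_mul]

end Existence

theorem stmt16 (G : Type*) [Group G] [Finite G] [Group.IsNilpotent G]
    (φ : G ≃* G) (hcop : Nat.Coprime (orderOf φ) (Nat.card G)) (g : G) :
    ∃! cu : G × G, φ cu.1 = cu.1 ∧ (∃ v : G, cu.2 = v⁻¹ * φ v) ∧ g = cu.1 * cu.2 := by
  have hk : ∀ x : G, (φ ^ orderOf φ) x = x := by
    intro x
    rw [pow_orderOf_eq_one φ]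
    rfl
  -- the subgroup of fixed points
  set C : Subgroup G :=
    { carrier := {x : G | φ x = x}
      one_mem' := map_one φ
      mul_mem' := by
        intro a b ha hb
        simp only [Set.mem_setOf_eq] at *
        rw [map_mul, ha, hb]
      inv_mem' := by
        intro a ha
        simp only [Set.mem_setOf_eq] at *
        rw [map_inv, ha] } with hC
  have hmemC : ∀ x : G, x ∈ C ↔ φ x = x := fun x => Iff.rfl
  -- the map from C × (right cosets) to G
  have hlift : ∀ a b : G, (QuotientGroup.rightRel C) a b → a⁻¹ * φ a = b⁻¹ * φ b := by
    intro a b hab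
    have h' : φ (b * a⁻¹) = b * a⁻¹ := (hmemC _).mp (QuotientGroup.rightRel_apply.mp hab)
    rw [map_mul, map_inv] at h'
    have h2 : b⁻¹ * (φ b * (φ a)⁻¹) * φ a = b⁻¹ * (b * a⁻¹) * φ a := by rw [h']
    rw [show b⁻¹ * φ b = b⁻¹ * (φ b * (φ a)⁻¹) * φ a by group, h2]
    group
  set fq : Quotient (QuotientGroup.rightRel C) → G :=
    Quotient.lift (fun v : G => v⁻¹ * φ v) hlift with hfq
  set Φ : C × Quotient (QuotientGroup.rightRel C) → G :=
    fun p => (p.1 : G) * fq p.2 with hΦ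
  have hΦmk : ∀ (c : C) (v : G),
      Φ (c, Quotient.mk (QuotientGroup.rightRel C) v) = (c : G) * (v⁻¹ * φ v) := fun c v => rfl
  -- surjectivity from the existence lemma
  have hsurj : Function.Surjective Φ := by
    intro x
    obtain ⟨c, v, hc, hx⟩ :=
      exists_decomp G ‹Finite G› φ (orderOf φ) hk hcop x
    exact ⟨(⟨c, (hmemC c).mpr hc⟩, Quotient.mk (QuotientGroup.rightRel C) v), by
      rw [hΦmk]; exact hx.symm⟩
  -- cardinality count
  have hcard : Nat.card (C × Quotient (QuotientGroup.rightRel C)) = Nat.card G := by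
    rw [Nat.card_prod,
      Nat.card_congr (QuotientGroup.quotientRightRelEquivQuotientLeftRel C),
      mul_comm, ← Subgroup.card_eq_card_quotient_mul_card_subgroup C]
  have hbij : Function.Bijective Φ :=
    (Nat.bijective_iff_surjective_and_card Φ).mpr ⟨hsurj, hcard⟩
  -- build the unique decomposition
  obtain ⟨c, v, hc, hx⟩ := exists_decomp G ‹Finite G› φ (orderOf φ) hk hcop g
  refine ⟨(c, v⁻¹ * φ v), ⟨hc, ⟨v, rfl⟩, hx⟩, ?_⟩
  rintro ⟨c', u'⟩ ⟨hc', ⟨v', hv'⟩, hx'⟩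
  dsimp only at hc' hv' hx'
  have h1 : Φ (⟨c', (hmemC c').mpr hc'⟩, Quotient.mk (QuotientGroup.rightRel C) v')
      = Φ (⟨c, (hmemC c).mpr hc⟩, Quotient.mk (QuotientGroup.rightRel C) v) := by
    rw [hΦmk, hΦmk, ← hv', ← hx', ← hx]
  have h2 := hbij.injective h1
  have hcc : c' = c := congrArg (fun p : C × _ => (p.1 : G)) h2
  have huu : u' = v⁻¹ * φ v := by
    rw [hv']
    have := congrArg (fun p : C × Quotient (QuotientGroup.rightRel C) => fq p.2) h2
    simpa [hfq] using this
  exact Prod.ext hcc huu
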